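/- Let λ be a partition of n, and let μ be the content associated to a weak composition comp_n(J) for a multiset J of elements in {0,...,n} (i.e., the multiplicity of h in μ equals the h-th entry of comp_n(J)). Then standardization gives a bijection between semistandard Young tableaux of shape λ and content μ and the set of standard Young tableaux S of shape λ whose descent set Dsi(S) is contained in the support of J (those elements of {1,...,n−1} appearing in J with positive multiplicity). -/

import Mathlib

open MvPolynomial

noncomputable section
open scoped Classical

namespace GHS

def entrySumF (μ : YoungDiagram) (f : ℕ → ℕ → ℕ) : ℕ := ∑ c ∈ μ.cells, f c.1 c.2

def entryFun {μ : YoungDiagram} (M : SemistandardYoungTableau μ) : ℕ → ℕ → ℕ := fun r c => M r c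

def entrySum {μ : YoungDiagram} (M : SemistandardYoungTableau μ) : ℕ := entrySumF μ (entryFun M)

def entryMultisetF (μ : YoungDiagram) (f : ℕ → ℕ → ℕ) : Multiset ℕ :=
  μ.cells.val.map fun c => f c.1 c.2

def entryMultiset {μ : YoungDiagram} (M : SemistandardYoungTableau μ) : Multiset ℕ := entryMultisetF μ (entryFun M)

def countLtF (μ : YoungDiagram) (f : ℕ → ℕ → ℕ) (h : ℕ) : ℕ :=
  (μ.cells.filter fun c => f c.1 c.2 < h).card

def countGe {μ : YoungDiagram} (M : SemistandardYoungTableau μ) (t : ℕ) : ℕ :=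
  (μ.cells.filter fun c => t ≤ M c.1 c.2).card

def maxEntryF (μ : YoungDiagram) (f : ℕ → ℕ → ℕ) : ℕ := μ.cells.sup fun c => f c.1 c.2

def DspCF (n : ℕ) (μ : YoungDiagram) (f : ℕ → ℕ → ℕ) : Multiset ℕ :=
  (Finset.Icc 1 (maxEntryF μ f)).val.map fun h => n - countLtF μ f h

def DspC (n : ℕ) {μ : YoungDiagram} (M : SemistandardYoungTableau μ) : Multiset ℕ := DspCF n μ (entryFun M)

def stdFun (μ : YoungDiagram) (f : ℕ → ℕ → ℕ) : ℕ → ℕ → ℕ := fun r c =>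
  if (r, c) ∈ μ then
    (μ.cells.filter fun c' => f c'.1 c'.2 < f r c ∨ (f c'.1 c'.2 = f r c ∧ c'.2 < c)).card + 1
  else 0

def IsStandard (n : ℕ) {μ : YoungDiagram} (S : SemistandardYoungTableau μ) : Prop :=
  entryMultiset S = (Multiset.range n).map (· + 1)

def rowOfF (f : ℕ → ℕ → ℕ) (v : ℕ) : ℕ := sInf {r | ∃ c, f r c = v}

def DsiSet (n : ℕ) {μ : YoungDiagram} (S : SemistandardYoungTableau μ) : Finset ℕ :=
  (Finset.Ioo 0 n).filter fun i => rowOfF (entryFun S) i < rowOfF (entryFun S) (i + 1)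

def jseq (n k : ℕ) (J : Multiset ℕ) (h : ℕ) : ℕ :=
  if h = 0 then 0 else if h = k then n else (J.sort (· ≤ ·)).getD (h - 1) 0

def compFun (n k : ℕ) (J : Multiset ℕ) (h : ℕ) : ℕ := jseq n k J (h + 1) - jseq n k J h

def compMap (n k : ℕ) (J : Multiset ℕ) : Fin k → ℕ := fun h => compFun n k J (h : ℕ)

def contentOfJ (n k : ℕ) (J : Multiset ℕ) : Multiset ℕ :=
  (Multiset.range k).bind fun h => Multiset.replicate (compFun n k J h) h

def IsTabloid (n : ℕ) (μ : YoungDiagram) (T : Fin n → ℕ × ℕ) : Prop :=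
  Function.Injective T ∧ ∀ i, T i ∈ μ

def IsStdFill (n : ℕ) (T : Fin n → ℕ × ℕ) : Prop :=
  ∀ i j : Fin n,
    (((T i).1 = (T j).1 ∧ (T i).2 < (T j).2) ∨ ((T i).2 = (T j).2 ∧ (T i).1 < (T j).1)) → i < j

def rowGroup (n : ℕ) (T : Fin n → ℕ × ℕ) : Finset (Equiv.Perm (Fin n)) :=
  Finset.univ.filter fun τ => ∀ i, (T (τ i)).1 = (T i).1

def colGroup (n : ℕ) (T : Fin n → ℕ × ℕ) : Finset (Equiv.Perm (Fin n)) :=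
  Finset.univ.filter fun σ => ∀ i, (T (σ i)).2 = (T i).2

def pmonF (n : ℕ) (f : ℕ → ℕ → ℕ) (T : Fin n → ℕ × ℕ) : MvPolynomial (Fin n) ℚ :=
  ∏ i, X i ^ f (T i).1 (T i).2

def pexpF (n : ℕ) (f : ℕ → ℕ → ℕ) (T : Fin n → ℕ × ℕ) : Fin n →₀ ℕ :=
  Finsupp.equivFunOnFinite.symm fun i => f (T i).1 (T i).2

def symRT (n : ℕ) (T : Fin n → ℕ × ℕ) (p : MvPolynomial (Fin n) ℚ) : MvPolynomial (Fin n) ℚ :=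
  ∑ τ ∈ rowGroup n T, rename (⇑τ) p

def antisym (n : ℕ) (T : Fin n → ℕ × ℕ) (p : MvPolynomial (Fin n) ℚ) : MvPolynomial (Fin n) ℚ :=
  ∑ σ ∈ colGroup n T, ((Equiv.Perm.sign σ : ℤ) : ℚ) • rename (⇑σ) p

def youngSym (n : ℕ) (T : Fin n → ℕ × ℕ) (p : MvPolynomial (Fin n) ℚ) : MvPolynomial (Fin n) ℚ :=
  antisym n T (symRT n T p)

def stabCardF (n : ℕ) (f : ℕ → ℕ → ℕ) (T : Fin n → ℕ × ℕ) : ℕ :=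
  ((rowGroup n T).filter fun τ : Equiv.Perm (Fin n) => rename (⇑τ) (pmonF n f T) = pmonF n f T).card

def rowPoly (n : ℕ) (f : ℕ → ℕ → ℕ) (T : Fin n → ℕ × ℕ) : MvPolynomial (Fin n) ℚ :=
  (stabCardF n f T : ℚ)⁻¹ • symRT n T (pmonF n f T)

def FMTF (n : ℕ) (f : ℕ → ℕ → ℕ) (T : Fin n → ℕ × ℕ) : MvPolynomial (Fin n) ℚ :=
  (stabCardF n f T : ℚ)⁻¹ • youngSym n T (pmonF n f T)

def FMT (n : ℕ) {μ : YoungDiagram} (M : SemistandardYoungTableau μ) (T : Fin n → ℕ × ℕ) : MvPolynomial (Fin n) ℚ :=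
  FMTF n (entryFun M) T

def degT (n : ℕ) (T : Fin n → ℕ × ℕ) (d : Fin n →₀ ℕ) (j : ℕ) : ℕ :=
  ∑ i ∈ Finset.univ.filter fun i => (T i).2 = j, d i

def gtT (n : ℕ) (T : Fin n → ℕ × ℕ) (d e : Fin n →₀ ℕ) : Prop :=
  ∃ j, degT n T e j < degT n T d j ∧ ∀ j', j < j' → degT n T d j' = degT n T e j'

def VMF (n : ℕ) (μ : YoungDiagram) (f : ℕ → ℕ → ℕ) : Submodule ℚ (MvPolynomial (Fin n) ℚ) :=
  Submodule.span ℚ {p | ∃ T, IsTabloid n μ T ∧ p = FMTF n f T}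

def VM (n : ℕ) {μ : YoungDiagram} (M : SemistandardYoungTableau μ) : Submodule ℚ (MvPolynomial (Fin n) ℚ) :=
  VMF n μ (entryFun M)

def spechtP (n : ℕ) (T : Fin n → ℕ × ℕ) : MvPolynomial (Fin n) ℚ := ∏ i, X i ^ (T i).1

def SpechtSub (n : ℕ) (μ : YoungDiagram) : Submodule ℚ (MvPolynomial (Fin n) ℚ) :=
  Submodule.span ℚ {p | ∃ T, IsTabloid n μ T ∧ p = youngSym n T (spechtP n T)}

def EqHoms (n : ℕ) (W V : Submodule ℚ (MvPolynomial (Fin n) ℚ)) :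
    Submodule ℚ (W →ₗ[ℚ] MvPolynomial (Fin n) ℚ) where
  carrier := {g | (∀ x, g x ∈ V) ∧ ∀ (σ : Equiv.Perm (Fin n)) (x y : W),
      (y : MvPolynomial (Fin n) ℚ) = rename (⇑σ) (x : MvPolynomial (Fin n) ℚ) →
      g y = rename (⇑σ) (g x)}
  add_mem' := by
    rintro a b ⟨ha1, ha2⟩ ⟨hb1, hb2⟩
    refine ⟨fun x => ?_, fun σ x y hxy => ?_⟩
    · simpa using V.add_mem (ha1 x) (hb1 x)
    · simp [LinearMap.add_apply, map_add, ha2 σ x y hxy, hb2 σ x y hxy]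
  zero_mem' := ⟨fun x => by simp, fun σ x y hxy => by simp⟩
  smul_mem' := by
    rintro c a ⟨ha1, ha2⟩
    refine ⟨fun x => ?_, fun σ x y hxy => ?_⟩
    · simpa using V.smul_mem c (ha1 x)
    · simp [LinearMap.smul_apply, map_smul, ha2 σ x y hxy]

def multiplicityIn (n : ℕ) (W V : Submodule ℚ (MvPolynomial (Fin n) ℚ)) : ℕ :=
  Module.finrank ℚ ↑(EqHoms n W V)

def contentSub (n : ℕ) (μc : Multiset ℕ) : Submodule ℚ (MvPolynomial (Fin n) ℚ) :=
  Submodule.span ℚ {p | ∃ d : Fin n → ℕ, Finset.univ.val.map d = μc ∧ p = ∏ i, X i ^ d i}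

def padded (n : ℕ) (μc : Multiset ℕ) : Multiset ℕ :=
  μc + Multiset.replicate (n - Multiset.card μc) 0

def IsCocharge {μ : YoungDiagram} (C : SemistandardYoungTableau μ) : Prop :=
  ∀ h : ℕ, 0 < h → ∀ v ∈ μ.cells, C v.1 v.2 = h →
    (∀ v' ∈ μ.cells, C v'.1 v'.2 = h → v.2 ≤ v'.2) →
    ∃ v'' ∈ μ.cells, C v''.1 v''.2 = h - 1 ∧ v''.1 < v.1

def updF (f : ℕ → ℕ → ℕ) (r c v : ℕ) : ℕ → ℕ → ℕ :=
  fun r' c' => if r' = r ∧ c' = c then v else f r' c'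

def slide : ℕ → (ℕ → ℕ → ℕ) → ℕ × ℕ → (ℕ → ℕ → ℕ) × (ℕ × ℕ)
  | 0, f, p => (f, p)
  | fuel + 1, f, (r, c) =>
    let down := f (r + 1) c
    let right := f r (c + 1)
    if down = 0 ∧ right = 0 then (f, (r, c))
    else if right = 0 ∨ (down ≠ 0 ∧ down < right) then
      slide fuel (updF (updF f r c down) (r + 1) c 0) (r + 1, c)
    else
      slide fuel (updF (updF f r c right) r (c + 1) 0) (r, c + 1)

def evacAux : ℕ → (ℕ → ℕ → ℕ) → ℕ → ℕ → ℕ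
  | 0, _ => fun _ _ => 0
  | m + 1, f =>
    let gp := slide (m + 1) (updF f 0 0 0) (0, 0)
    updF (evacAux m gp.1) gp.2.1 gp.2.2 (m + 1)

def ctJfun (J : Multiset ℕ) (f : ℕ → ℕ → ℕ) : ℕ → ℕ → ℕ :=
  fun r c => J.countP fun j => j < f r c

def JminF (μ : YoungDiagram) (f : ℕ → ℕ → ℕ) : Multiset ℕ :=
  (Finset.Icc 1 (maxEntryF μ f)).val.map fun h => countLtF μ f h

def deltaOne (n : ℕ) (μ : YoungDiagram) (f : ℕ → ℕ → ℕ) (v : ℕ × ℕ) : Prop :=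
  ¬ (rowOfF (evacAux n (stdFun μ f)) n < v.1)

def hatAdd (n : ℕ) (μ : YoungDiagram) (f : ℕ → ℕ → ℕ) (v : ℕ × ℕ) : ℕ → ℕ → ℕ :=
  let Sv := evacAux (n + 1) (updF (evacAux n (stdFun μ f)) v.1 v.2 (n + 1))
  let Jp : Multiset ℕ := (JminF μ f).map (· + 1)
  if deltaOne n μ f v then ctJfun Jp Sv else ctJfun (1 ::ₘ Jp) Sv

def iotaHatFun (f : ℕ → ℕ → ℕ) : ℕ → ℕ → ℕ :=
  fun r c => if r = 0 then (if c = 0 then 0 else f 0 (c - 1)) else f r c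

def iotaT (n : ℕ) (lam : YoungDiagram) (T : Fin n → ℕ × ℕ) : Fin (n + 1) → ℕ × ℕ :=
  fun i => if h : (i : ℕ) < n then T ⟨(i : ℕ), h⟩ else (0, lam.rowLen 0)

def plusOneF (μ : YoungDiagram) (f : ℕ → ℕ → ℕ) : ℕ → ℕ → ℕ :=
  fun r c => if (r, c) ∈ μ then f r c + 1 else 0

def Omega (n : ℕ) (α : ℕ → ℕ) :=
  {w : Fin n → ℕ // ∀ h, (Finset.univ.filter fun i => w i = h).card = α h}

def shiftW (n : ℕ) (α : ℕ → ℕ) (σ : Equiv.Perm (Fin n)) (w : Omega n α) : Omega n α :=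
  ⟨fun i => w.1 (σ.symm i), by
    intro h
    have key : (Finset.univ.filter fun i => w.1 (σ.symm i) = h)
        = (Finset.univ.filter fun i => w.1 i = h).image σ := by
      ext i
      simp only [Finset.mem_filter, Finset.mem_univ, true_and, Finset.mem_image]
      constructor
      · intro hi
        exact ⟨σ.symm i, hi, Equiv.apply_symm_apply σ i⟩
      · rintro ⟨j, hj, rfl⟩
        simpa using hj
    rw [key, Finset.card_image_of_injective _ σ.injective]
    exact w.2 h⟩

def permOmega (n : ℕ) (α : ℕ → ℕ) (σ : Equiv.Perm (Fin n)) : Omega n α ≃ Omega n α where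
  toFun := shiftW n α σ
  invFun := shiftW n α σ⁻¹
  left_inv w := by
    apply Subtype.ext
    funext i
    simp [shiftW, Equiv.Perm.inv_def]
  right_inv w := by
    apply Subtype.ext
    funext i
    simp [shiftW, Equiv.Perm.inv_def]

def ExtPart (n d : ℕ) : Submodule ℚ (MvPolynomial (Fin (n + 1)) ℚ) :=
  ⨆ (lam : YoungDiagram) (_ : lam.card = n) (M : SemistandardYoungTableau lam) (_ : entrySum M = d)
    (v : ℕ × ℕ) (_ : v ∉ lam.cells) (ν : YoungDiagram) (_ : ν.cells = insert v lam.cells)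
    (_ : deltaOne n lam (entryFun M) v),
    VMF (n + 1) ν (hatAdd n lam (entryFun M) v)

def LEPart (n d : ℕ) : Submodule ℚ (MvPolynomial (Fin (n + 1)) ℚ) :=
  ⨆ (lam : YoungDiagram) (_ : lam.card = n) (M : SemistandardYoungTableau lam) (_ : entrySum M + n = d)
    (v : ℕ × ℕ) (_ : v ∉ lam.cells) (ν : YoungDiagram) (_ : ν.cells = insert v lam.cells)
    (_ : ¬ deltaOne n lam (entryFun M) v),
    VMF (n + 1) ν (hatAdd n lam (entryFun M) v)

def EPart (n d : ℕ) : Submodule ℚ (MvPolynomial (Fin (n + 1)) ℚ) :=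
  ⨆ (e : ℕ) (_ : e + (n + 1) = d),
    (homogeneousSubmodule (Fin (n + 1)) ℚ e).map
      (LinearMap.mulLeft ℚ (∏ i : Fin (n + 1), (X i : MvPolynomial (Fin (n + 1)) ℚ)))



/- ### multiset countP helpers -/
lemma countP_mono {s : Multiset ℕ} {p q : ℕ → Prop} [DecidablePred p] [DecidablePred q]
    (h : ∀ a ∈ s, p a → q a) :
    s.countP p ≤ s.countP q := by
  rw [Multiset.countP_eq_countP_filter_add s q p]
  have h1 : (s.filter p).countP q = (s.filter p).card :=
    Multiset.countP_eq_card.2 (fun a ha => h a (Multiset.mem_of_mem_filter ha)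
      (Multiset.of_mem_filter ha))
  calc s.countP p = (s.filter p).card := by rw [Multiset.countP_eq_card_filter]
    _ = (s.filter p).countP q := h1.symm
    _ ≤ (s.filter p).countP q + (s.filter (fun a => ¬ p a)).countP q := Nat.le_add_right _ _

lemma countP_eq_add_of_imp {s : Multiset ℕ} {p q : ℕ → Prop} [DecidablePred p] [DecidablePred q]
    (h : ∀ a ∈ s, p a → q a) :
    s.countP q = s.countP p + (s.filter (fun a => ¬ p a)).countP q := by
  rw [Multiset.countP_eq_countP_filter_add s q p]
  congr 1
  have h1 : (s.filter p).countP q = (s.filter p).card :=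
    Multiset.countP_eq_card.2 (fun a ha => h a (Multiset.mem_of_mem_filter ha)
      (Multiset.of_mem_filter ha))
  rw [h1, ← Multiset.countP_eq_card_filter]

/- ### sorted list counting -/
lemma sorted_countP_iff {L : List ℕ} (hL : L.Pairwise (· ≤ ·)) {v : ℕ} :
    ∀ h, h < L.length → (L.getD h 0 < v ↔ h < L.countP (fun x => decide (x < v))) := by
  induction L with
  | nil => intro h hh; simp at hh
  | cons a T ih =>
    rw [List.pairwise_cons] at hL
    obtain ⟨ha, hT⟩ := hL
    intro h hh
    by_cases hav : a < v
    · have hc : (a :: T).countP (fun x => decide (x < v)) =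
        T.countP (fun x => decide (x < v)) + 1 := by
        rw [List.countP_cons]; simp [hav]
      cases h with
      | zero => simp [hc, hav]
      | succ h =>
        have hh' : h < T.length := by simpa using hh
        have := ih hT h hh'
        simpa [hc, Nat.succ_lt_succ_iff] using this
    · have hzero : (a :: T).countP (fun x => decide (x < v)) = 0 := by
        rw [List.countP_eq_zero]
        intro x hx
        simp only [decide_eq_true_eq]
        rcases List.mem_cons.1 hx with rfl | hx
        · exact hav
        · exact fun hlt => hav (lt_of_le_of_lt (ha x hx) hlt)
      rw [hzero]
      simp only [Nat.not_lt_zero, iff_false, not_lt]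
      cases h with
      | zero => simpa using not_lt.1 hav
      | succ h =>
        have hh' : h < T.length := by simpa using hh
        have hmem : T.getD h 0 ∈ T := by
          rw [List.getD_eq_getElem _ _ hh']; exact List.getElem_mem _
        exact le_trans (le_trans (not_lt.1 hav) (ha _ hmem)) (le_refl _)


section JseqLemmas

variable {n k : ℕ} {J : Multiset ℕ}

lemma jseq_zero : jseq n k J 0 = 0 := by simp [jseq]

lemma jseq_k (hk : 1 ≤ k) : jseq n k J k = n := by
  rw [jseq, if_neg (by omega), if_pos rfl]

lemma jseq_mid {h : ℕ} (h1 : 1 ≤ h) (h2 : h < k) :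
    jseq n k J h = (J.sort (· ≤ ·)).getD (h - 1) 0 := by
  rw [jseq, if_neg (by omega), if_neg (by omega)]

lemma getD_le_n (hJ : ∀ j ∈ J, j ≤ n) (i : ℕ) : (J.sort (· ≤ ·)).getD i 0 ≤ n := by
  by_cases hi : i < (J.sort (· ≤ ·)).length
  · rw [List.getD_eq_getElem _ _ hi]
    exact hJ _ (Multiset.mem_sort (· ≤ ·) |>.1 (List.getElem_mem hi))
  · rw [List.getD_eq_default _ _ (by omega)]
    exact Nat.zero_le n

lemma jseq_le_n (hk : 1 ≤ k) (hJ : ∀ j ∈ J, j ≤ n) (h : ℕ) : jseq n k J h ≤ n := by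
  rcases Nat.eq_zero_or_pos h with rfl | h1
  · rw [jseq_zero]; exact Nat.zero_le n
  rcases eq_or_ne h k with rfl | hne
  · rw [jseq_k hk]
  · rw [jseq, if_neg (by omega), if_neg hne]
    exact getD_le_n hJ _

lemma jseq_mono (hk : 1 ≤ k) (hJcard : Multiset.card J = k - 1) (hJ : ∀ j ∈ J, j ≤ n)
    {a b : ℕ} (hab : a ≤ b) (hbk : b ≤ k) : jseq n k J a ≤ jseq n k J b := by
  have hlen : (J.sort (· ≤ ·)).length = k - 1 := by
    rw [Multiset.length_sort, hJcard]
  rcases Nat.eq_zero_or_pos a with rfl | ha1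
  · rw [jseq_zero]; exact Nat.zero_le _
  rcases eq_or_ne b k with rfl | hbk'
  · rw [jseq_k hk]; exact jseq_le_n hk hJ a
  · have hbk2 : b < k := lt_of_le_of_ne hbk hbk'
    have hb1 : 1 ≤ b := le_trans ha1 hab
    rw [jseq_mid ha1 (lt_of_le_of_lt hab hbk2), jseq_mid hb1 hbk2]
    have hblt : b - 1 < (J.sort (· ≤ ·)).length := by omega
    have halt : a - 1 < (J.sort (· ≤ ·)).length := by omega
    rw [List.getD_eq_getElem _ _ halt, List.getD_eq_getElem _ _ hblt]
    have := (Multiset.pairwise_sort J (· ≤ ·)).rel_get_of_le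
      (a := ⟨a - 1, halt⟩) (b := ⟨b - 1, hblt⟩) (by simp [Fin.mk_le_mk]; omega)
    simpa [List.get_eq_getElem] using this

lemma sum_compFun (hk : 1 ≤ k) (hJcard : Multiset.card J = k - 1) (hJ : ∀ j ∈ J, j ≤ n) :
    ∀ t, t ≤ k → ∑ h ∈ Finset.range t, compFun n k J h = jseq n k J t := by
  intro t
  induction t with
  | zero => intro _; simp [jseq_zero]
  | succ t ih =>
    intro ht
    rw [Finset.sum_range_succ, ih (by omega)]
    have hmono := jseq_mono (n := n) hk hJcard hJ (Nat.le_succ t) ht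
    rw [compFun]
    simp only [Nat.succ_eq_add_one] at *
    omega

lemma countP_replicate' (p : ℕ → Prop) [DecidablePred p] (m a : ℕ) :
    (Multiset.replicate m a).countP p = if p a then m else 0 := by
  by_cases hpa : p a
  · rw [if_pos hpa, Multiset.countP_eq_card.2, Multiset.card_replicate]
    intro x hx
    rw [Multiset.eq_of_mem_replicate hx]; exact hpa
  · rw [if_neg hpa, Multiset.countP_eq_zero.2]
    intro x hx
    rw [Multiset.eq_of_mem_replicate hx]; exact hpa

lemma content_countP_le (hk : 1 ≤ k) (hJcard : Multiset.card J = k - 1) (hJ : ∀ j ∈ J, j ≤ n)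
    (h : ℕ) : (contentOfJ n k J).countP (· ≤ h) = jseq n k J (min (h + 1) k) := by
  rw [contentOfJ]
  suffices H : ∀ t, t ≤ k → ((Multiset.range t).bind fun h' =>
      Multiset.replicate (compFun n k J h') h').countP (· ≤ h) = jseq n k J (min (h + 1) t) by
    exact H k (le_refl k)
  intro t
  induction t with
  | zero => intro _; simp [jseq_zero]
  | succ t ih =>
    intro ht
    rw [Multiset.range_succ, Multiset.cons_bind, Multiset.countP_add, ih (by omega),
      countP_replicate']
    by_cases hth : t ≤ h
    · rw [if_pos hth, min_eq_right (by omega : t ≤ h + 1), min_eq_right (by omega)]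
      have hmono := jseq_mono (n := n) hk hJcard hJ (Nat.le_succ t) ht
      rw [compFun]
      simp only [Nat.succ_eq_add_one] at *
      omega
    · rw [if_neg hth, min_eq_left (by omega), min_eq_left (by omega)]
      omega

lemma content_card (hk : 1 ≤ k) (hJcard : Multiset.card J = k - 1) (hJ : ∀ j ∈ J, j ≤ n) :
    Multiset.card (contentOfJ n k J) = n := by
  have h1 : (contentOfJ n k J).countP (· ≤ k) = Multiset.card (contentOfJ n k J) := by
    rw [Multiset.countP_eq_card]
    intro a ha
    rw [contentOfJ] at ha
    obtain ⟨h', hh', ha'⟩ := Multiset.mem_bind.1 ha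
    rw [Multiset.eq_of_mem_replicate ha']
    exact le_of_lt (by simpa using hh')
  rw [← h1, content_countP_le hk hJcard hJ, min_eq_right (by omega), jseq_k hk]

lemma countP_lt_eq_iff (hk : 1 ≤ k) (hJcard : Multiset.card J = k - 1) (hJ : ∀ j ∈ J, j ≤ n)
    {v h : ℕ} (hv : 1 ≤ v) (hvn : v ≤ n) :
    J.countP (· < v) = h ↔ (jseq n k J h < v ∧ v ≤ jseq n k J (h + 1)) := by
  have hlen : (J.sort (· ≤ ·)).length = k - 1 := by rw [Multiset.length_sort, hJcard]
  have hbridge : J.countP (· < v) = (J.sort (· ≤ ·)).countP (fun x => decide (x < v)) := by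
    conv_lhs => rw [← Multiset.sort_eq J (· ≤ ·)]
    rw [Multiset.coe_countP]
  have hS1 := sorted_countP_iff (Multiset.pairwise_sort J (· ≤ ·)) (v := v)
  have hgle : J.countP (· < v) ≤ k - 1 := by
    rw [← hJcard]; exact Multiset.countP_le_card _ J
  constructor
  · rintro rfl
    set c := J.countP (· < v) with hc
    constructor
    · rcases Nat.eq_zero_or_pos c with hc0 | hc1
      · rw [hc0, jseq_zero]; omega
      · have hck : c < k := by omega
        rw [jseq_mid hc1 hck]
        have hlt : c - 1 < (J.sort (· ≤ ·)).length := by omega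
        exact (hS1 (c - 1) hlt).2 (by rw [← hbridge]; omega)
    · rcases eq_or_ne (c + 1) k with hck | hck
      · rw [hck, jseq_k hk]; exact hvn
      · have hck2 : c + 1 < k := by omega
        rw [jseq_mid (by omega) hck2]
        have hlt : c < (J.sort (· ≤ ·)).length := by omega
        have := (hS1 c hlt).not
        simp only [not_lt] at this
        exact this.2 (by rw [← hbridge])
  · rintro ⟨h1, h2⟩
    have hhk : h ≤ k - 1 := by
      by_contra hcon
      have hk1 : k ≤ h := by omega
      rcases eq_or_ne h k with rfl | hne
      · rw [jseq_k hk] at h1; omega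
      · have hh0 : h ≠ 0 := by omega
        rw [jseq, if_neg hh0, if_neg hne, List.getD_eq_default _ _ (by omega)] at h1
        have hne2 : h + 1 ≠ k := by omega
        rw [jseq, if_neg (by omega), if_neg hne2, List.getD_eq_default _ _ (by omega)] at h2
        omega
    have hge : h ≤ J.countP (· < v) := by
      rcases Nat.eq_zero_or_pos h with rfl | hh1
      · exact Nat.zero_le _
      · have hhk2 : h < k := by omega
        rw [jseq_mid hh1 hhk2] at h1
        have hlt : h - 1 < (J.sort (· ≤ ·)).length := by omega
        have := (hS1 (h - 1) hlt).1 h1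
        rw [← hbridge] at this
        omega
    have hle : J.countP (· < v) ≤ h := by
      by_contra hcon
      have hlt : h < (J.sort (· ≤ ·)).length := by omega
      have := (hS1 h hlt).2 (by rw [← hbridge]; omega)
      have hne2 : h + 1 ≠ k := by omega
      rw [jseq, if_neg (by omega), if_neg hne2] at h2
      simp only [Nat.add_sub_cancel] at h2
      omega
    omega

end JseqLemmas


section RankLemmas

def ltf (f : ℕ → ℕ → ℕ) (w u : ℕ × ℕ) : Prop :=
  f w.1 w.2 < f u.1 u.2 ∨ (f w.1 w.2 = f u.1 u.2 ∧ w.2 < u.2)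

def rankf (μ : YoungDiagram) (f : ℕ → ℕ → ℕ) (u : ℕ × ℕ) : ℕ :=
  (μ.cells.filter fun w => ltf f w u).card

lemma ltf_irrefl (f : ℕ → ℕ → ℕ) (u : ℕ × ℕ) : ¬ ltf f u u := by
  rintro (h | ⟨_, h⟩) <;> omega

lemma ltf_trans {f : ℕ → ℕ → ℕ} {a b c : ℕ × ℕ} (h1 : ltf f a b) (h2 : ltf f b c) :
    ltf f a c := by
  rcases h1 with h1 | ⟨h1, h1'⟩ <;> rcases h2 with h2 | ⟨h2, h2'⟩
  · exact Or.inl (lt_trans h1 h2)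
  · exact Or.inl (h2 ▸ h1)
  · exact Or.inl (h1 ▸ h2)
  · exact Or.inr ⟨h1.trans h2, lt_trans h1' h2'⟩

lemma stdFun_eq (μ : YoungDiagram) (f : ℕ → ℕ → ℕ) (r c : ℕ) :
    stdFun μ f r c = if (r, c) ∈ μ then rankf μ f (r, c) + 1 else 0 := by
  rw [stdFun, rankf]
  congr

variable {lam : YoungDiagram}

lemma ltf_total (M : SemistandardYoungTableau lam) {w u : ℕ × ℕ}
    (hw : w ∈ lam.cells) (hu : u ∈ lam.cells) (hne : w ≠ u) :
    ltf (entryFun M) w u ∨ ltf (entryFun M) u w := by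
  rcases lt_trichotomy (M w.1 w.2) (M u.1 u.2) with h | h | h
  · exact Or.inl (Or.inl h)
  · rcases lt_trichotomy w.2 u.2 with hc | hc | hc
    · exact Or.inl (Or.inr ⟨h, hc⟩)
    · exfalso
      obtain ⟨wr, wc⟩ := w
      obtain ⟨ur, uc⟩ := u
      simp only at hc h
      subst hc
      have hr : wr ≠ ur := fun h' => hne (by simp [h'])
      rcases lt_or_gt_of_ne hr with hr' | hr'
      · have := M.col_strict hr' ((YoungDiagram.mem_cells _).1 hu)
        omega
      · have := M.col_strict hr' ((YoungDiagram.mem_cells _).1 hw)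
        omega
    · exact Or.inr (Or.inr ⟨h.symm, hc⟩)
  · exact Or.inr (Or.inl h)

lemma rank_lt_rank {f : ℕ → ℕ → ℕ} {w u : ℕ × ℕ} (hw : w ∈ lam.cells)
    (h : ltf f w u) : rankf lam f w < rankf lam f u := by
  apply Finset.card_lt_card
  constructor
  · intro x hx
    rw [Finset.mem_filter] at hx ⊢
    exact ⟨hx.1, ltf_trans hx.2 h⟩
  · intro hcon
    have := hcon (Finset.mem_filter.2 ⟨hw, h⟩)
    exact ltf_irrefl f w (Finset.mem_filter.1 this).2

lemma rank_lt_card {f : ℕ → ℕ → ℕ} {u : ℕ × ℕ} (hu : u ∈ lam.cells) :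
    rankf lam f u < lam.card := by
  have h1 : lam.cells.filter (fun w => ltf f w u) ⊆ lam.cells.erase u := by
    intro x hx
    rw [Finset.mem_filter] at hx
    refine Finset.mem_erase.2 ⟨?_, hx.1⟩
    rintro rfl
    exact ltf_irrefl f x hx.2
  calc rankf lam f u ≤ (lam.cells.erase u).card := Finset.card_le_card h1
    _ < lam.cells.card := Finset.card_erase_lt_of_mem hu

lemma rank_injOn (M : SemistandardYoungTableau lam) :
    ∀ w ∈ lam.cells, ∀ u ∈ lam.cells,
      rankf lam (entryFun M) w = rankf lam (entryFun M) u → w = u := by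
  intro w hw u hu heq
  by_contra hne
  rcases ltf_total M hw hu hne with h | h
  · exact absurd heq (Nat.ne_of_lt (rank_lt_rank hw h))
  · exact absurd heq.symm (Nat.ne_of_lt (rank_lt_rank hu h))

lemma rank_image {n : ℕ} (M : SemistandardYoungTableau lam) (hcard : lam.card = n) :
    lam.cells.image (rankf lam (entryFun M)) = Finset.range n := by
  apply Finset.eq_of_subset_of_card_le
  · intro x hx
    obtain ⟨u, hu, rfl⟩ := Finset.mem_image.1 hx
    exact Finset.mem_range.2 (hcard ▸ rank_lt_card hu)
  · rw [Finset.card_range, Finset.card_image_of_injOn (fun w hw u hu => rank_injOn M w hw u hu)]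
    exact le_of_eq hcard.symm

lemma rank_map {n : ℕ} (M : SemistandardYoungTableau lam) (hcard : lam.card = n) :
    lam.cells.val.map (rankf lam (entryFun M)) = Multiset.range n := by
  have hnodup : (lam.cells.val.map (rankf lam (entryFun M))).Nodup :=
    Multiset.Nodup.map_on (fun x hx y hy => rank_injOn M x hx y hy) lam.cells.nodup
  have h1 : (lam.cells.image (rankf lam (entryFun M))).val
      = lam.cells.val.map (rankf lam (entryFun M)) := by
    rw [Finset.image_val, Multiset.dedup_eq_self.2 hnodup]
  rw [← h1, rank_image M hcard, Finset.range_val]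

lemma rank_surj {n : ℕ} (M : SemistandardYoungTableau lam) (hcard : lam.card = n)
    {i : ℕ} (hi : i < n) : ∃ u ∈ lam.cells, rankf lam (entryFun M) u = i := by
  have : i ∈ lam.cells.val.map (rankf lam (entryFun M)) := by
    rw [rank_map M hcard]; exact Multiset.mem_range.2 hi
  obtain ⟨u, hu, hru⟩ := Multiset.mem_map.1 this
  exact ⟨u, hu, hru⟩

lemma hstrip (M : SemistandardYoungTableau lam) {w u : ℕ × ℕ}
    (hu : u ∈ lam.cells) (hval : M w.1 w.2 = M u.1 u.2) (hc : w.2 < u.2) :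
    u.1 ≤ w.1 := by
  by_contra hcon
  have hlt : w.1 < u.1 := by omega
  have hmem : (u.1, w.2) ∈ lam :=
    lam.up_left_mem (le_refl u.1) (le_of_lt hc) ((YoungDiagram.mem_cells _).1 hu)
  have h1 : M w.1 w.2 < M u.1 w.2 := M.col_strict hlt hmem
  have h2 : M u.1 w.2 ≤ M u.1 u.2 := M.row_weak hc ((YoungDiagram.mem_cells _).1 hu)
  omega

lemma rowOf_eq (S : SemistandardYoungTableau lam) {u : ℕ × ℕ} (hu : u ∈ lam.cells)
    (hne : S u.1 u.2 ≠ 0) (huniq : ∀ w ∈ lam.cells, S w.1 w.2 = S u.1 u.2 → w = u) :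
    rowOfF (entryFun S) (S u.1 u.2) = u.1 := by
  have hset : {r | ∃ c, entryFun S r c = S u.1 u.2} = {u.1} := by
    ext r
    simp only [Set.mem_setOf_eq, Set.mem_singleton_iff]
    constructor
    · rintro ⟨c, hc⟩
      have hmem : (r, c) ∈ lam.cells := by
        rw [YoungDiagram.mem_cells]
        by_contra hcon
        have hzero : entryFun S r c = 0 := S.zeros hcon
        rw [hzero] at hc
        exact hne hc.symm
      exact congrArg Prod.fst (huniq (r, c) hmem hc)
    · rintro rfl
      exact ⟨u.2, rfl⟩
  rw [rowOfF, hset, csInf_singleton]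

lemma card_filter_eq (μ : YoungDiagram) (f : ℕ → ℕ → ℕ) (p : ℕ → Prop) [DecidablePred p] :
    (μ.cells.filter fun w => p (f w.1 w.2)).card = (entryMultisetF μ f).countP p := by
  rw [entryMultisetF, Multiset.countP_map]
  rfl

end RankLemmas

section Part1

lemma part1 (n k : ℕ) (hn : 1 ≤ n) (hk : 1 ≤ k)
    (lam : YoungDiagram) (hcard : lam.card = n)
    (J : Multiset ℕ) (hJcard : Multiset.card J = k - 1) (hJ : ∀ j ∈ J, j ≤ n)
    (M : SemistandardYoungTableau lam) (hM : entryMultiset M = contentOfJ n k J) :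
    ∃! S : SemistandardYoungTableau lam,
      (IsStandard n S ∧ ∀ i ∈ DsiSet n S, i ∈ J) ∧
      ∀ r c, S r c = stdFun lam (entryFun M) r c := by
  have hrw : ∀ {i j1 j2 : ℕ}, j1 < j2 → (i, j2) ∈ lam →
      stdFun lam (entryFun M) i j1 ≤ stdFun lam (entryFun M) i j2 := by
    intro i j1 j2 hj hmem
    have hmem1 : (i, j1) ∈ lam := lam.up_left_mem (le_refl i) (le_of_lt hj) hmem
    rw [stdFun_eq, stdFun_eq, if_pos hmem1, if_pos hmem]
    have hlt : ltf (entryFun M) (i, j1) (i, j2) := by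
      have := M.row_weak hj hmem
      rcases lt_or_eq_of_le this with h | h
      · exact Or.inl h
      · exact Or.inr ⟨h, hj⟩
    have := rank_lt_rank (f := entryFun M) ((YoungDiagram.mem_cells _).2 hmem1) hlt
    omega
  have hcs : ∀ {i1 i2 j : ℕ}, i1 < i2 → (i2, j) ∈ lam →
      stdFun lam (entryFun M) i1 j < stdFun lam (entryFun M) i2 j := by
    intro i1 i2 j hi hmem
    have hmem1 : (i1, j) ∈ lam := lam.up_left_mem (le_of_lt hi) (le_refl j) hmem
    rw [stdFun_eq, stdFun_eq, if_pos hmem1, if_pos hmem]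
    have hlt : ltf (entryFun M) (i1, j) (i2, j) := Or.inl (M.col_strict hi hmem)
    have := rank_lt_rank (f := entryFun M) ((YoungDiagram.mem_cells _).2 hmem1) hlt
    omega
  have hz : ∀ {i j : ℕ}, (i, j) ∉ lam → stdFun lam (entryFun M) i j = 0 := by
    intro i j hmem
    rw [stdFun_eq, if_neg hmem]
  set S : SemistandardYoungTableau lam := ⟨stdFun lam (entryFun M), hrw, hcs, hz⟩ with hSdef
  have hSapp : ∀ r c, S r c = stdFun lam (entryFun M) r c := fun r c => rfl
  have hSrank : ∀ u ∈ lam.cells, S u.1 u.2 = rankf lam (entryFun M) u + 1 := by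
    intro u hu
    rw [hSapp, stdFun_eq, if_pos ((YoungDiagram.mem_cells _).1 hu)]
  have hstd : IsStandard n S := by
    rw [IsStandard, entryMultiset, entryMultisetF, ← rank_map M hcard, Multiset.map_map]
    exact Multiset.map_congr rfl (fun u hu => hSrank u hu)
  have hdes : ∀ i ∈ DsiSet n S, i ∈ J := by
    intro i hi
    rw [DsiSet, Finset.mem_filter, Finset.mem_Ioo] at hi
    obtain ⟨⟨hi0, hin⟩, hrowlt⟩ := hi
    obtain ⟨u, hu, hru⟩ := rank_surj M hcard (show i - 1 < n by omega)
    obtain ⟨u', hu', hru'⟩ := rank_surj M hcard (show i < n by omega)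
    have hSu : S u.1 u.2 = i := by rw [hSrank u hu, hru]; omega
    have hSu' : S u'.1 u'.2 = i + 1 := by rw [hSrank u' hu', hru']
    have huniq : ∀ w ∈ lam.cells, S w.1 w.2 = S u.1 u.2 → w = u := by
      intro w hw hval
      apply rank_injOn M w hw u hu
      have h1 := hSrank w hw
      rw [hval, hSu] at h1
      rw [hru]
      omega
    have huniq' : ∀ w ∈ lam.cells, S w.1 w.2 = S u'.1 u'.2 → w = u' := by
      intro w hw hval
      apply rank_injOn M w hw u' hu'
      have h1 := hSrank w hw
      rw [hval, hSu'] at h1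
      rw [hru']
      omega
    have hrow_u : rowOfF (entryFun S) i = u.1 := by
      rw [← hSu]; exact rowOf_eq S hu (by rw [hSu]; omega) huniq
    have hrow_u' : rowOfF (entryFun S) (i + 1) = u'.1 := by
      rw [show i + 1 = S u'.1 u'.2 from hSu'.symm]
      exact rowOf_eq S hu' (by rw [hSu']; omega) huniq'
    rw [hrow_u, hrow_u'] at hrowlt
    have hrankne : rankf lam (entryFun M) u < rankf lam (entryFun M) u' := by rw [hru, hru']; omega
    rcases lt_trichotomy ((entryFun M) u.1 u.2) ((entryFun M) u'.1 u'.2) with hlt | heqv | hgt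
    · -- value jump: i is a boundary, hence in J
      have hcnt : (lam.cells.filter fun w => (entryFun M) w.1 w.2 ≤ (entryFun M) u.1 u.2).card = i := by
        have hle : (lam.cells.filter fun w => (entryFun M) w.1 w.2 ≤ (entryFun M) u.1 u.2).card
            ≤ rankf lam (entryFun M) u' := by
          apply Finset.card_le_card
          intro w hw
          rw [Finset.mem_filter] at hw ⊢
          exact ⟨hw.1, Or.inl (lt_of_le_of_lt hw.2 hlt)⟩
        have hge : rankf lam (entryFun M) u + 1 ≤
            (lam.cells.filter fun w => (entryFun M) w.1 w.2 ≤ (entryFun M) u.1 u.2).card := by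
          have hnotmem : u ∉ lam.cells.filter (fun w => ltf (entryFun M) w u) := by
            intro hcon
            exact ltf_irrefl (entryFun M) u (Finset.mem_filter.1 hcon).2
          have hsub : insert u (lam.cells.filter fun w => ltf (entryFun M) w u)
              ⊆ lam.cells.filter fun w => (entryFun M) w.1 w.2 ≤ (entryFun M) u.1 u.2 := by
            intro w hw
            rcases Finset.mem_insert.1 hw with rfl | hw'
            · exact Finset.mem_filter.2 ⟨hu, le_refl _⟩
            · rw [Finset.mem_filter] at hw' ⊢
              refine ⟨hw'.1, ?_⟩
              rcases hw'.2 with h | ⟨h, _⟩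
              · exact le_of_lt h
              · exact le_of_eq h
          have := Finset.card_le_card hsub
          rw [Finset.card_insert_of_notMem hnotmem] at this
          exact this
        rw [hru] at hge
        rw [hru'] at hle
        omega
      have hcnt2 : (contentOfJ n k J).countP (· ≤ (entryFun M) u.1 u.2) = i := by
        rw [← hM]
        rw [show entryMultiset M = entryMultisetF lam (entryFun M) from rfl, ← card_filter_eq]
        exact hcnt
      rw [content_countP_le hk hJcard hJ] at hcnt2
      set h := (entryFun M) u.1 u.2 with hh
      have hhk : h + 1 < k := by
        by_contra hcon
        rw [min_eq_right (by omega), jseq_k hk] at hcnt2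
        omega
      rw [min_eq_left (by omega), jseq_mid (by omega) hhk] at hcnt2
      simp only [Nat.add_sub_cancel] at hcnt2
      have hlen : (J.sort (· ≤ ·)).length = k - 1 := by
        rw [Multiset.length_sort, hJcard]
      have hmem : (J.sort (· ≤ ·)).getD h 0 ∈ J.sort (· ≤ ·) := by
        rw [List.getD_eq_getElem _ _ (by omega)]
        exact List.getElem_mem _
      rw [hcnt2] at hmem
      exact (Multiset.mem_sort _).1 hmem
    · -- equal values: contradiction with descent
      exfalso
      have hne : u ≠ u' := by
        rintro rfl
        exact lt_irrefl _ hrankne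
      rcases ltf_total M hu hu' hne with hl | hl
      · rcases hl with hv | ⟨_, hcol⟩
        · exact absurd hv (by omega)
        · have := hstrip M hu' heqv hcol
          omega
      · have := rank_lt_rank (f := entryFun M) hu' hl
        omega
    · exfalso
      have := rank_lt_rank (f := entryFun M) hu' (Or.inl hgt : ltf (entryFun M) u' u)
      omega
  refine ⟨S, ⟨⟨hstd, hdes⟩, hSapp⟩, ?_⟩
  intro S' hS'
  apply SemistandardYoungTableau.ext
  intro r c
  rw [hS'.2 r c]
  exact (hSapp r c).symm

end Part1

section Part2

lemma part2 (n k : ℕ) (hn : 1 ≤ n) (hk : 1 ≤ k)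
    (lam : YoungDiagram) (hcard : lam.card = n)
    (J : Multiset ℕ) (hJcard : Multiset.card J = k - 1) (hJ : ∀ j ∈ J, j ≤ n)
    (S : SemistandardYoungTableau lam) (hstd : IsStandard n S)
    (hdes : ∀ i ∈ DsiSet n S, i ∈ J) :
    ∃! M : SemistandardYoungTableau lam, entryMultiset M = contentOfJ n k J ∧
      ∀ r c, S r c = stdFun lam (entryFun M) r c := by
  have hstd' : entryMultiset S = (Multiset.range n).map (· + 1) := hstd
  have hSnodup : (lam.cells.val.map (fun u => S u.1 u.2)).Nodup := by
    rw [show lam.cells.val.map (fun u => S u.1 u.2) = entryMultiset S from rfl, hstd']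
    exact (Multiset.nodup_range n).map (fun a b h => by omega)
  have hSinj : ∀ w ∈ lam.cells, ∀ u ∈ lam.cells, S w.1 w.2 = S u.1 u.2 → w = u := by
    intro w hw u hu h
    exact Multiset.inj_on_of_nodup_map hSnodup w hw u hu h
  have hSval : ∀ u ∈ lam.cells, 1 ≤ S u.1 u.2 ∧ S u.1 u.2 ≤ n := by
    intro u hu
    have : S u.1 u.2 ∈ entryMultiset S :=
      Multiset.mem_map_of_mem (fun (u : ℕ × ℕ) => S u.1 u.2) (by exact hu)
    rw [hstd'] at this
    obtain ⟨t, ht, hte⟩ := Multiset.mem_map.1 this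
    rw [Multiset.mem_range] at ht
    omega
  have hSex : ∀ i, 1 ≤ i → i ≤ n → ∃ u ∈ lam.cells, S u.1 u.2 = i := by
    intro i h1 h2
    have : i ∈ entryMultiset S := by
      rw [hstd']
      exact Multiset.mem_map.2 ⟨i - 1, Multiset.mem_range.2 (by omega), by omega⟩
    obtain ⟨u, hu, hue⟩ := Multiset.mem_map.1 this
    exact ⟨u, hu, hue⟩
  have hrowOf : ∀ u ∈ lam.cells, rowOfF (entryFun S) (S u.1 u.2) = u.1 := by
    intro u hu
    exact rowOf_eq S hu (by have := (hSval u hu).1; omega)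
      (fun w hw hval => hSinj w hw u hu hval)
  have hchain : ∀ i, 1 ≤ i → ∀ i', i ≤ i' → i' ≤ n →
      (∀ t, i ≤ t → t < i' → t ∉ J) →
      rowOfF (entryFun S) i' ≤ rowOfF (entryFun S) i := by
    intro i h1 i'
    induction i' with
    | zero => intro h _ _; exact absurd h (by omega)
    | succ m ih =>
      intro him hmn hnJ
      rcases Nat.lt_or_ge i (m + 1) with hlt | hge
      · have him' : i ≤ m := by omega
        have hmJ : m ∉ J := hnJ m him' (by omega)
        have hnd : m ∉ DsiSet n S := fun hc => hmJ (hdes m hc)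
        have hnd' : ¬ (rowOfF (entryFun S) m < rowOfF (entryFun S) (m + 1)) := by
          intro hc
          exact hnd (Finset.mem_filter.2 ⟨Finset.mem_Ioo.2 ⟨by omega, by omega⟩, hc⟩)
        have := ih him' (by omega) (fun t ht ht' => hnJ t ht (by omega))
        omega
      · have : i = m + 1 := by omega
        rw [this]
  have hlemC : ∀ u ∈ lam.cells, ∀ w ∈ lam.cells, S w.1 w.2 < S u.1 u.2 →
      J.countP (· < S w.1 w.2) = J.countP (· < S u.1 u.2) →
      u.1 ≤ w.1 ∧ w.2 < u.2 := by
    rintro ⟨ur, uc⟩ hu ⟨wr, wc⟩ hw hlt0 hgeq0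
    have hlt : S wr wc < S ur uc := hlt0
    have hgeq : J.countP (· < S wr wc) = J.countP (· < S ur uc) := hgeq0
    show ur ≤ wr ∧ wc < uc
    have hnJ : ∀ t, S wr wc ≤ t → t < S ur uc → t ∉ J := by
      intro t ht ht' htJ
      have hadd : J.countP (· < S ur uc) = J.countP (· < S wr wc)
          + (J.filter (fun a => ¬ a < S wr wc)).countP (· < S ur uc) :=
        countP_eq_add_of_imp (fun a _ ha => lt_trans ha hlt)
      have hmem : t ∈ J.filter (fun a => ¬ a < S wr wc) :=
        Multiset.mem_filter.2 ⟨htJ, by omega⟩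
      have hpos : 0 < (J.filter (fun a => ¬ a < S wr wc)).countP (· < S ur uc) :=
        Multiset.countP_pos_of_mem hmem (by omega)
      omega
    have hv1 : 1 ≤ S wr wc := (hSval (wr, wc) hw).1
    have hv2 : S ur uc ≤ n := (hSval (ur, uc) hu).2
    have hrow := hchain (S wr wc) hv1 (S ur uc) (le_of_lt hlt) hv2 hnJ
    have hr1 : rowOfF (entryFun S) (S ur uc) = ur := hrowOf (ur, uc) hu
    have hr2 : rowOfF (entryFun S) (S wr wc) = wr := hrowOf (wr, wc) hw
    rw [hr1, hr2] at hrow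
    refine ⟨hrow, ?_⟩
    rcases lt_trichotomy wc uc with hc | hc | hc
    · exact hc
    · exfalso
      subst hc
      have hne : wr ≠ ur := by
        intro h
        rw [h] at hlt
        omega
      have hr : ur < wr := lt_of_le_of_ne hrow (Ne.symm hne)
      have h1 : S ur wc < S wr wc := S.col_strict hr ((YoungDiagram.mem_cells _).1 hw)
      omega
    · exfalso
      rcases eq_or_lt_of_le hrow with hr | hr
      · have h2 : S wr uc ≤ S wr wc := S.row_weak hc ((YoungDiagram.mem_cells _).1 hw)
        rw [hr] at hlt
        omega
      · have hmem2 : (wr, uc) ∈ lam :=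
          lam.up_left_mem (le_refl wr) (le_of_lt hc) ((YoungDiagram.mem_cells _).1 hw)
        have h1 : S ur uc < S wr uc := S.col_strict hr hmem2
        have h2 : S wr uc ≤ S wr wc := S.row_weak hc ((YoungDiagram.mem_cells _).1 hw)
        omega
  -- construct M
  have hg0 : J.countP (· < 0) = 0 := Multiset.countP_eq_zero.2 (fun a _ => by omega)
  have hMrw : ∀ {i j1 j2 : ℕ}, j1 < j2 → (i, j2) ∈ lam →
      J.countP (· < S i j1) ≤ J.countP (· < S i j2) := by
    intro i j1 j2 hj hmem
    have hle := S.row_weak hj hmem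
    exact countP_mono (fun a _ ha => by omega)
  have hMcs : ∀ {i1 i2 j : ℕ}, i1 < i2 → (i2, j) ∈ lam →
      J.countP (· < S i1 j) < J.countP (· < S i2 j) := by
    intro i1 i2 j hi hmem
    have hmem1 : (i1, j) ∈ lam := lam.up_left_mem (le_of_lt hi) (le_refl j) hmem
    have hSlt : S i1 j < S i2 j := S.col_strict hi hmem
    have hle : J.countP (· < S i1 j) ≤ J.countP (· < S i2 j) :=
      countP_mono (fun a _ ha => by omega)
    rcases eq_or_lt_of_le hle with heq | h
    · exfalso
      have := hlemC (i2, j) ((YoungDiagram.mem_cells _).2 hmem) (i1, j)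
        ((YoungDiagram.mem_cells _).2 hmem1) hSlt heq
      exact absurd this.2 (by omega)
    · exact h
  have hMz : ∀ {i j : ℕ}, (i, j) ∉ lam → J.countP (· < S i j) = 0 := by
    intro i j h
    rw [S.zeros h]
    exact hg0
  set M : SemistandardYoungTableau lam :=
    ⟨fun r c => J.countP (· < S r c), hMrw, hMcs, hMz⟩ with hMdef
  have hMapp : ∀ r c, entryFun M r c = J.countP (· < S r c) := fun r c => rfl
  -- content of M
  have hcontent : entryMultiset M = contentOfJ n k J := by
    have h1 : entryMultiset M = ((Multiset.range n).map (· + 1)).map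
        (fun v => J.countP (· < v)) := by
      rw [← hstd', entryMultiset, entryMultiset, entryMultisetF, entryMultisetF,
        Multiset.map_map]
      rfl
    rw [h1, Multiset.map_map]
    ext h
    rw [Multiset.count_map, contentOfJ, Multiset.count_bind]
    simp only [Function.comp_apply]
    have hrhs : ((Multiset.range k).map
        (fun h' => Multiset.count h (Multiset.replicate (compFun n k J h') h'))).sum
        = if h < k then compFun n k J h else 0 := by
      have h2 : ((Multiset.range k).map
          (fun h' => Multiset.count h (Multiset.replicate (compFun n k J h') h'))).sum
          = ∑ h' ∈ Finset.range k, if h' = h then compFun n k J h' else 0 := by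
        rw [Finset.sum]
        congr 1
        rw [Finset.range_val]
        apply Multiset.map_congr rfl
        intro x _
        rw [Multiset.count_replicate]
      rw [h2, Finset.sum_ite_eq' (Finset.range k) h (fun h' => compFun n k J h')]
      simp [Finset.mem_range]
    rw [hrhs]
    by_cases hhk : h < k
    · rw [if_pos hhk]
      have hjle : jseq n k J (h + 1) ≤ n := jseq_le_n hk hJ _
      have hjm : jseq n k J h ≤ jseq n k J (h + 1) :=
        jseq_mono hk hJcard hJ (Nat.le_succ h) (by omega)
      have hfe : (Multiset.range n).filter (fun t => h = J.countP (· < t + 1))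
          = (Multiset.range n).filter (fun t => jseq n k J h ≤ t ∧ t < jseq n k J (h + 1)) := by
        apply Multiset.filter_congr
        intro t ht
        rw [Multiset.mem_range] at ht
        rw [eq_comm, countP_lt_eq_iff hk hJcard hJ (by omega) (by omega)]
        omega
      rw [hfe]
      have hb : ((Multiset.range n).filter
          (fun t => jseq n k J h ≤ t ∧ t < jseq n k J (h + 1))).card
          = ((Finset.range n).filter
          (fun t => jseq n k J h ≤ t ∧ t < jseq n k J (h + 1))).card := by
        rw [← Finset.range_val, ← Finset.filter_val]
        rfl
      rw [hb]
      have hc : (Finset.range n).filter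
          (fun t => jseq n k J h ≤ t ∧ t < jseq n k J (h + 1))
          = Finset.Ico (jseq n k J h) (jseq n k J (h + 1)) := by
        ext t
        simp only [Finset.mem_filter, Finset.mem_range, Finset.mem_Ico]
        omega
      rw [hc, Nat.card_Ico, compFun]
    · rw [if_neg hhk]
      have : (Multiset.range n).filter (fun t => h = J.countP (· < t + 1)) = 0 := by
        rw [Multiset.filter_eq_nil]
        intro t _ hcon
        have hle := Multiset.countP_le_card (· < t + 1) J
        omega
      rw [this, Multiset.card_zero]
  -- key iff for standardization
  have hkey : ∀ w ∈ lam.cells, ∀ u ∈ lam.cells,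
      (ltf (entryFun M) w u ↔ S w.1 w.2 < S u.1 u.2) := by
    intro w hw u hu
    rw [ltf, hMapp, hMapp]
    constructor
    · rintro (hv | ⟨hv, hcol⟩)
      · by_contra hcon
        have hmono := countP_mono (s := J) (p := (· < S u.1 u.2))
          (q := (· < S w.1 w.2)) (fun a _ ha => by omega)
        omega
      · by_contra hcon
        have hne : w ≠ u := fun h => by rw [h] at hcol; omega
        have hne2 : S w.1 w.2 ≠ S u.1 u.2 := fun h => hne (hSinj w hw u hu h)
        have hlt : S u.1 u.2 < S w.1 w.2 := by omega
        have := hlemC w hw u hu hlt hv.symm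
        omega
    · intro hlt
      have hle : J.countP (· < S w.1 w.2) ≤ J.countP (· < S u.1 u.2) :=
        countP_mono (fun a _ ha => by omega)
      rcases eq_or_lt_of_le hle with heq | hv
      · exact Or.inr ⟨heq, (hlemC u hu w hw hlt heq).2⟩
      · exact Or.inl hv
  have hrank : ∀ u ∈ lam.cells, rankf lam (entryFun M) u + 1 = S u.1 u.2 := by
    intro u hu
    have h1 : lam.cells.filter (fun w => ltf (entryFun M) w u)
        = lam.cells.filter (fun w => S w.1 w.2 < S u.1 u.2) :=
      Finset.filter_congr (fun w hw => hkey w hw u hu)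
    have h2 : (lam.cells.filter fun w => S w.1 w.2 < S u.1 u.2).card
        = ((Multiset.range n).map (· + 1)).countP (· < S u.1 u.2) := by
      rw [← hstd']
      exact card_filter_eq lam (entryFun S) (· < S u.1 u.2)
    have h3 : ((Multiset.range n).map (· + 1)).countP (· < S u.1 u.2)
        = S u.1 u.2 - 1 := by
      rw [Multiset.countP_map]
      have hb : ((Multiset.range n).filter fun a => a + 1 < S u.1 u.2).card
          = ((Finset.range n).filter fun a => a + 1 < S u.1 u.2).card := by
        rw [← Finset.range_val, ← Finset.filter_val]
        rfl
      have hc : (Finset.range n).filter (fun a => a + 1 < S u.1 u.2)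
          = Finset.range (S u.1 u.2 - 1) := by
        have hun := (hSval u hu).2
        ext t
        simp only [Finset.mem_filter, Finset.mem_range]
        omega
      rw [hb, hc, Finset.card_range]
    have h4 : rankf lam (entryFun M) u
        = (lam.cells.filter fun w => ltf (entryFun M) w u).card := rfl
    have h5 := (hSval u hu).1
    rw [h4, h1, h2, h3]
    omega
  have hstdeq : ∀ r c, S r c = stdFun lam (entryFun M) r c := by
    intro r c
    by_cases hmem : (r, c) ∈ lam
    · rw [stdFun_eq, if_pos hmem]
      exact (hrank (r, c) ((YoungDiagram.mem_cells _).2 hmem)).symm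
    · rw [stdFun_eq, if_neg hmem]
      exact S.zeros hmem
  -- uniqueness bounds
  have hbounds : ∀ (X : SemistandardYoungTableau lam),
      entryMultiset X = contentOfJ n k J →
      (∀ r c, S r c = stdFun lam (entryFun X) r c) →
      ∀ r c, (r, c) ∈ lam.cells →
        S r c ≤ (contentOfJ n k J).countP (· ≤ entryFun X r c) ∧
        (∀ w, entryFun X r c = w + 1 →
          (contentOfJ n k J).countP (· ≤ w) < S r c) := by
    intro X hcX heqX r c hu
    have hmem : (r, c) ∈ lam := (YoungDiagram.mem_cells _).1 hu
    have hrk : rankf lam (entryFun X) (r, c) + 1 = S r c := by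
      have := heqX r c
      rw [stdFun_eq, if_pos hmem] at this
      exact this.symm
    have hrkdef : rankf lam (entryFun X) (r, c)
        = (lam.cells.filter fun w => ltf (entryFun X) w (r, c)).card := rfl
    constructor
    · have hnotmem : (r, c) ∉ lam.cells.filter (fun w => ltf (entryFun X) w (r, c)) :=
        fun hc => ltf_irrefl _ (r, c) (Finset.mem_filter.1 hc).2
      have hsub : insert (r, c) (lam.cells.filter fun w => ltf (entryFun X) w (r, c))
          ⊆ lam.cells.filter fun w => entryFun X w.1 w.2 ≤ entryFun X r c := by
        intro x hx
        rcases Finset.mem_insert.1 hx with rfl | hx'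
        · exact Finset.mem_filter.2 ⟨hu, le_refl _⟩
        · rw [Finset.mem_filter] at hx' ⊢
          refine ⟨hx'.1, ?_⟩
          rcases hx'.2 with h | ⟨h, _⟩
          · exact le_of_lt h
          · exact le_of_eq h
      have hcard := Finset.card_le_card hsub
      rw [Finset.card_insert_of_notMem hnotmem] at hcard
      have hc2 : (lam.cells.filter fun w => entryFun X w.1 w.2 ≤ entryFun X r c).card
          = (contentOfJ n k J).countP (· ≤ entryFun X r c) := by
        rw [← hcX]
        exact card_filter_eq lam (entryFun X) (· ≤ entryFun X r c)
      omega
    · intro w hw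
      have hsub2 : lam.cells.filter (fun w' => entryFun X w'.1 w'.2 ≤ w)
          ⊆ lam.cells.filter (fun w' => ltf (entryFun X) w' (r, c)) := by
        intro x hx
        rw [Finset.mem_filter] at hx ⊢
        refine ⟨hx.1, Or.inl ?_⟩
        have hx2 : entryFun X x.1 x.2 ≤ w := hx.2
        have hw2 : entryFun X (r, c).1 (r, c).2 = w + 1 := hw
        show entryFun X x.1 x.2 < entryFun X (r, c).1 (r, c).2
        omega
      have hcard := Finset.card_le_card hsub2
      have hc2 : (lam.cells.filter fun w' => entryFun X w'.1 w'.2 ≤ w).card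
          = (contentOfJ n k J).countP (· ≤ w) := by
        rw [← hcX]
        exact card_filter_eq lam (entryFun X) (· ≤ w)
      omega
  refine ⟨M, ⟨hcontent, hstdeq⟩, ?_⟩
  intro M' hM'
  apply SemistandardYoungTableau.ext
  intro r c
  by_cases hmem : (r, c) ∈ lam
  · have hu : (r, c) ∈ lam.cells := (YoungDiagram.mem_cells _).2 hmem
    have hB1 := hbounds M' hM'.1 hM'.2 r c hu
    have hB2 := hbounds M hcontent hstdeq r c hu
    have hi1 : 1 ≤ S r c := (hSval (r, c) hu).1
    show entryFun M' r c = entryFun M r c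
    rcases lt_trichotomy (entryFun M' r c) (entryFun M r c) with hlt | heq | hgt
    · exfalso
      obtain ⟨m, hm⟩ : ∃ m, entryFun M r c = m + 1 := ⟨entryFun M r c - 1, by omega⟩
      have h1 := hB2.2 m hm
      have h2 := hB1.1
      have h3 : (contentOfJ n k J).countP (· ≤ entryFun M' r c)
          ≤ (contentOfJ n k J).countP (· ≤ m) :=
        countP_mono (fun a _ ha => by omega)
      omega
    · exact heq
    · exfalso
      obtain ⟨m, hm⟩ : ∃ m, entryFun M' r c = m + 1 := ⟨entryFun M' r c - 1, by omega⟩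
      have h1 := hB1.2 m hm
      have h2 := hB2.1
      have h3 : (contentOfJ n k J).countP (· ≤ entryFun M r c)
          ≤ (contentOfJ n k J).countP (· ≤ m) :=
        countP_mono (fun a _ ha => by omega)
      omega
  · show entryFun M' r c = entryFun M r c
    have h1 : entryFun M' r c = 0 := M'.zeros hmem
    have h2 : entryFun M r c = 0 := M.zeros hmem
    rw [h1, h2]

end Part2

theorem stmt1 (n k : ℕ) (hn : 1 ≤ n) (hk : 1 ≤ k)
    (lam : YoungDiagram) (hcard : lam.card = n)
    (J : Multiset ℕ) (hJcard : Multiset.card J = k - 1) (hJ : ∀ j ∈ J, j ≤ n) :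
    (∀ M : SemistandardYoungTableau lam, entryMultiset M = contentOfJ n k J →
      ∃! S : SemistandardYoungTableau lam,
        (IsStandard n S ∧ ∀ i ∈ DsiSet n S, i ∈ J) ∧
        ∀ r c, S r c = stdFun lam (entryFun M) r c) ∧
    (∀ S : SemistandardYoungTableau lam, IsStandard n S → (∀ i ∈ DsiSet n S, i ∈ J) →
      ∃! M : SemistandardYoungTableau lam, entryMultiset M = contentOfJ n k J ∧
        ∀ r c, S r c = stdFun lam (entryFun M) r c) := by
  constructor
  · intro M hM
    exact part1 n k hn hk lam hcard J hJcard hJ M hM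
  · intro S hS hD
    exact part2 n k hn hk lam hcard J hJcard hJ S hS hD
end GHS
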